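/- Fix ε, δ ∈ (0,1) and let p_{XYZMN} over finite sets 𝒳×𝒴×𝒵×ℳ×𝒩 satisfy the Markov conditions M−X−(Y,Z,N) and N−Y−(X,Z,M). If there exists an (R₁, R₂, ε) two-senders-one-receiver message compression with side information at the receiver for p_{XYZMN}, then there exists an (R₁, R₂, ε+2δ) two-senders-one-receiver message compression with side information at the receiver for p_{XYZMN} whose shared-randomness sets S_A and S_B each have cardinality at most 24|ℳ||𝒩|/δ³. -/

import Mathlib

open Finset Real
open scoped Classical

noncomputable section

variable {𝒳 𝒴 𝒵 ℳ 𝒩 : Type*} [Fintype 𝒳] [Fintype 𝒴] [Fintype 𝒵] [Fintype ℳ] [Fintype 𝒩]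

/-- Marginal on `X`. -/
def margX (p : 𝒳 → 𝒴 → 𝒵 → ℳ → 𝒩 → ℝ) (x : 𝒳) : ℝ := ∑ y, ∑ z, ∑ m, ∑ n, p x y z m n

/-- Marginal on `Y`. -/
def margY (p : 𝒳 → 𝒴 → 𝒵 → ℳ → 𝒩 → ℝ) (y : 𝒴) : ℝ := ∑ x, ∑ z, ∑ m, ∑ n, p x y z m n

/-- Marginal on `Z`. -/
def margZ (p : 𝒳 → 𝒴 → 𝒵 → ℳ → 𝒩 → ℝ) (z : 𝒵) : ℝ := ∑ x, ∑ y, ∑ m, ∑ n, p x y z m n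

/-- Marginal on `(X, M)`. -/
def margXM (p : 𝒳 → 𝒴 → 𝒵 → ℳ → 𝒩 → ℝ) (x : 𝒳) (m : ℳ) : ℝ := ∑ y, ∑ z, ∑ n, p x y z m n

/-- Marginal on `(Y, N)`. -/
def margYN (p : 𝒳 → 𝒴 → 𝒵 → ℳ → 𝒩 → ℝ) (y : 𝒴) (n : 𝒩) : ℝ := ∑ x, ∑ z, ∑ m, p x y z m n

/-- Marginal on `(X, Y, Z)`. -/
def margXYZ (p : 𝒳 → 𝒴 → 𝒵 → ℳ → 𝒩 → ℝ) (x : 𝒳) (y : 𝒴) (z : 𝒵) : ℝ := ∑ m, ∑ n, p x y z m n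

/-- Marginal on `(M, Z)`. -/
def margMZ (p : 𝒳 → 𝒴 → 𝒵 → ℳ → 𝒩 → ℝ) (m : ℳ) (z : 𝒵) : ℝ := ∑ x, ∑ y, ∑ n, p x y z m n

/-- Marginal on `(N, Z)`. -/
def margNZ (p : 𝒳 → 𝒴 → 𝒵 → ℳ → 𝒩 → ℝ) (n : 𝒩) (z : 𝒵) : ℝ := ∑ x, ∑ y, ∑ m, p x y z m n

/-- Marginal on `(M, N, Z)`. -/
def margMNZ (p : 𝒳 → 𝒴 → 𝒵 → ℳ → 𝒩 → ℝ) (m : ℳ) (n : 𝒩) (z : 𝒵) : ℝ := ∑ x, ∑ y, p x y z m n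

/-- Conditional `p_{M|X=x}(m)`. -/
def condMX (p : 𝒳 → 𝒴 → 𝒵 → ℳ → 𝒩 → ℝ) (x : 𝒳) (m : ℳ) : ℝ := margXM p x m / margX p x

/-- Conditional `p_{N|Y=y}(n)`. -/
def condNY (p : 𝒳 → 𝒴 → 𝒵 → ℳ → 𝒩 → ℝ) (y : 𝒴) (n : 𝒩) : ℝ := margYN p y n / margY p y

/-- Conditional `p_{M|N=n,Z=z}(m)`. -/
def condM_NZ (p : 𝒳 → 𝒴 → 𝒵 → ℳ → 𝒩 → ℝ) (m : ℳ) (n : 𝒩) (z : 𝒵) : ℝ :=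
  margMNZ p m n z / margNZ p n z

/-- Conditional `p_{N|M=m,Z=z}(n)`. -/
def condN_MZ (p : 𝒳 → 𝒴 → 𝒵 → ℳ → 𝒩 → ℝ) (n : 𝒩) (m : ℳ) (z : 𝒵) : ℝ :=
  margMNZ p m n z / margMZ p m z

/-- Conditional `p_{MN|Z=z}(m,n)`. -/
def condMN_Z (p : 𝒳 → 𝒴 → 𝒵 → ℳ → 𝒩 → ℝ) (m : ℳ) (n : 𝒩) (z : 𝒵) : ℝ :=
  margMNZ p m n z / margZ p z

/-- `p` is a probability mass function. -/
def IsDist (p : 𝒳 → 𝒴 → 𝒵 → ℳ → 𝒩 → ℝ) : Prop :=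
  (∀ x y z m n, 0 ≤ p x y z m n) ∧ (∑ x, ∑ y, ∑ z, ∑ m, ∑ n, p x y z m n) = 1

/-- The Markov conditions `M − X − (Y,Z,N)` and `N − Y − (X,Z,M)`:
`p(x,y,z,m,n) = p_{XYZ}(x,y,z) · p_{M|X=x}(m) · p_{N|Y=y}(n)` whenever `p_{XYZ}(x,y,z) > 0`. -/
def MarkovCond (p : 𝒳 → 𝒴 → 𝒵 → ℳ → 𝒩 → ℝ) : Prop :=
  ∀ x y z m n, 0 < margXYZ p x y z →
    p x y z m n = margXYZ p x y z * condMX p x m * condNY p y n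

/-- An `(R₁, R₂, ε)` two-senders–one-receiver message compression scheme with side
information at the receiver, for the joint distribution `p` on `𝒳 × 𝒴 × 𝒵 × ℳ × 𝒩`:
shared randomness `qA` between Alice and Charlie and `qB` between Bob and Charlie
(mutually independent and independent of `(X,Y,Z)`), encoders `fA`, `fB` into message
sets of sizes at most `2^⌈R₁⌉` and `2^⌈R₂⌉`, and a decoder `g` whose output `(M',N')`
satisfies `½‖p_{XYZM'N'} − p_{XYZMN}‖₁ ≤ ε`. -/
def IsTwoSenderScheme (p : 𝒳 → 𝒴 → 𝒵 → ℳ → 𝒩 → ℝ) (R₁ R₂ ε : ℝ) : Prop :=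
  ∃ (kA kB cA cB : ℕ) (qA : Fin kA → ℝ) (qB : Fin kB → ℝ)
    (fA : 𝒳 → Fin kA → Fin cA) (fB : 𝒴 → Fin kB → Fin cB)
    (g : Fin cA → Fin cB → 𝒵 → Fin kA → Fin kB → ℳ × 𝒩),
    (∀ s, 0 ≤ qA s) ∧ (∑ s, qA s) = 1 ∧
    (∀ s, 0 ≤ qB s) ∧ (∑ s, qB s) = 1 ∧
    ((cA : ℝ) ≤ (2 : ℝ) ^ (⌈R₁⌉ : ℤ)) ∧ ((cB : ℝ) ≤ (2 : ℝ) ^ (⌈R₂⌉ : ℤ)) ∧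
    (1 / 2) * (∑ x, ∑ y, ∑ z, ∑ m, ∑ n,
      |(∑ sa, ∑ sb, qA sa * qB sb * margXYZ p x y z *
          (if g (fA x sa) (fB y sb) z sa sb = (m, n) then 1 else 0)) - p x y z m n|) ≤ ε

/-- A two-senders–one-receiver scheme as in `IsTwoSenderScheme`, with the additional
requirement that the shared-randomness sets have cardinalities at most `bA` and `bB`. -/
def IsTwoSenderSchemeBounded (p : 𝒳 → 𝒴 → 𝒵 → ℳ → 𝒩 → ℝ) (R₁ R₂ ε bA bB : ℝ) : Prop :=
  ∃ (kA kB cA cB : ℕ) (qA : Fin kA → ℝ) (qB : Fin kB → ℝ)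
    (fA : 𝒳 → Fin kA → Fin cA) (fB : 𝒴 → Fin kB → Fin cB)
    (g : Fin cA → Fin cB → 𝒵 → Fin kA → Fin kB → ℳ × 𝒩),
    (∀ s, 0 ≤ qA s) ∧ (∑ s, qA s) = 1 ∧
    (∀ s, 0 ≤ qB s) ∧ (∑ s, qB s) = 1 ∧
    ((kA : ℝ) ≤ bA) ∧ ((kB : ℝ) ≤ bB) ∧
    ((cA : ℝ) ≤ (2 : ℝ) ^ (⌈R₁⌉ : ℤ)) ∧ ((cB : ℝ) ≤ (2 : ℝ) ^ (⌈R₂⌉ : ℤ)) ∧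
    (1 / 2) * (∑ x, ∑ y, ∑ z, ∑ m, ∑ n,
      |(∑ sa, ∑ sb, qA sa * qB sb * margXYZ p x y z *
          (if g (fA x sa) (fB y sb) z sa sb = (m, n) then 1 else 0)) - p x y z m n|) ≤ ε







lemma srr_sum_pi_prod {S : Type*} [Fintype S] {t : ℕ} (r : Fin t → S → ℝ) :
    ∑ σ : Fin t → S, ∏ i, r i (σ i) = ∏ i, ∑ s, r i s :=
  (Fintype.prod_sum (fun i s => r i s)).symm

lemma srr_exp_const {S : Type*} [Fintype S] {t : ℕ} (q : S → ℝ) (hq1 : ∑ s, q s = 1) :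
    ∑ σ : Fin t → S, (∏ j, q (σ j)) = 1 := by
  rw [srr_sum_pi_prod (fun _ s => q s)]
  simp [hq1]

lemma srr_exp_one {S : Type*} [Fintype S] {t : ℕ} (q : S → ℝ) (hq1 : ∑ s, q s = 1)
    (f : S → ℝ) (i : Fin t) :
    ∑ σ : Fin t → S, (∏ j, q (σ j)) * f (σ i) = ∑ s, q s * f s := by
  have key := srr_sum_pi_prod (fun j s => q s * (if j = i then f s else 1))
  have L : ∀ σ : Fin t → S, (∏ j, q (σ j) * (if j = i then f (σ j) else 1))
      = (∏ j, q (σ j)) * f (σ i) := by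
    intro σ
    rw [Finset.prod_mul_distrib]
    congr 1
    simpa using Finset.prod_ite_eq' Finset.univ i (fun j => f (σ j))
  have R : (∏ j : Fin t, ∑ s, q s * (if j = i then f s else 1)) = ∑ s, q s * f s := by
    have : ∀ j : Fin t, (∑ s, q s * (if j = i then f s else 1))
        = (if j = i then (∑ s, q s * f s) else 1) := by
      intro j
      by_cases hj : j = i <;> simp [hj, hq1]
    rw [Finset.prod_congr rfl (fun j _ => this j)]
    simpa using Finset.prod_ite_eq' Finset.univ i (fun _ => ∑ s, q s * f s)
  calc ∑ σ : Fin t → S, (∏ j, q (σ j)) * f (σ i)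
      = ∑ σ : Fin t → S, ∏ j, q (σ j) * (if j = i then f (σ j) else 1) := by
        exact Finset.sum_congr rfl (fun σ _ => (L σ).symm)
    _ = ∑ s, q s * f s := by rw [key, R]

lemma srr_exp_two {S : Type*} [Fintype S] {t : ℕ} (q : S → ℝ) (hq1 : ∑ s, q s = 1)
    (f : S → ℝ) {i i' : Fin t} (hii : i ≠ i') :
    ∑ σ : Fin t → S, (∏ j, q (σ j)) * (f (σ i) * f (σ i'))
      = (∑ s, q s * f s) * (∑ s, q s * f s) := by
  have key := srr_sum_pi_prod
    (fun j s => q s * (if j = i then f s else 1) * (if j = i' then f s else 1))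
  have L : ∀ σ : Fin t → S,
      (∏ j, q (σ j) * (if j = i then f (σ j) else 1) * (if j = i' then f (σ j) else 1))
      = (∏ j, q (σ j)) * (f (σ i) * f (σ i')) := by
    intro σ
    rw [Finset.prod_mul_distrib, Finset.prod_mul_distrib]
    have h1 : (∏ j, (if j = i then f (σ j) else 1)) = f (σ i) := by
      simpa using Finset.prod_ite_eq' Finset.univ i (fun j => f (σ j))
    have h2 : (∏ j, (if j = i' then f (σ j) else 1)) = f (σ i') := by
      simpa using Finset.prod_ite_eq' Finset.univ i' (fun j => f (σ j))
    rw [h1, h2]; ring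
  have R : (∏ j : Fin t, ∑ s, q s * (if j = i then f s else 1) * (if j = i' then f s else 1))
      = (∑ s, q s * f s) * (∑ s, q s * f s) := by
    have hj : ∀ j : Fin t, (∑ s, q s * (if j = i then f s else 1) * (if j = i' then f s else 1))
        = (if j = i then (∑ s, q s * f s) else 1) * (if j = i' then (∑ s, q s * f s) else 1) := by
      intro j
      by_cases h1 : j = i
      · subst h1
        simp [hii, Finset.sum_congr]
      · by_cases h2 : j = i' <;> simp [h1, h2, hq1, hii.symm]
    rw [Finset.prod_congr rfl (fun j _ => hj j), Finset.prod_mul_distrib]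
    have h1 : (∏ j : Fin t, (if j = i then (∑ s, q s * f s) else 1)) = ∑ s, q s * f s := by
      simpa using Finset.prod_ite_eq' Finset.univ i (fun _ => ∑ s, q s * f s)
    have h2 : (∏ j : Fin t, (if j = i' then (∑ s, q s * f s) else 1)) = ∑ s, q s * f s := by
      simpa using Finset.prod_ite_eq' Finset.univ i' (fun _ => ∑ s, q s * f s)
    rw [h1, h2]
  calc ∑ σ : Fin t → S, (∏ j, q (σ j)) * (f (σ i) * f (σ i'))
      = ∑ σ : Fin t → S,
          ∏ j, q (σ j) * (if j = i then f (σ j) else 1) * (if j = i' then f (σ j) else 1) :=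
        Finset.sum_congr rfl (fun σ _ => (L σ).symm)
    _ = _ := by rw [key, R]






lemma srr_jensen_abs {ι : Type*} [Fintype ι] (W v : ι → ℝ)
    (hW0 : ∀ i, 0 ≤ W i) (hW1 : ∑ i, W i = 1) :
    ∑ i, W i * |v i| ≤ Real.sqrt (∑ i, W i * v i ^ 2) := by
  have h0 : 0 ≤ ∑ i, W i * |v i| :=
    Finset.sum_nonneg fun i _ => mul_nonneg (hW0 i) (abs_nonneg _)
  have h1 : 0 ≤ ∑ i, W i * v i ^ 2 :=
    Finset.sum_nonneg fun i _ => mul_nonneg (hW0 i) (sq_nonneg _)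
  rw [Real.le_sqrt h0 h1]
  calc (∑ i, W i * |v i|) ^ 2
      = (∑ i, Real.sqrt (W i) * (Real.sqrt (W i) * |v i|)) ^ 2 := by
        congr 1; refine Finset.sum_congr rfl fun i _ => ?_
        rw [← mul_assoc, Real.mul_self_sqrt (hW0 i)]
    _ ≤ (∑ i, Real.sqrt (W i) ^ 2) * ∑ i, (Real.sqrt (W i) * |v i|) ^ 2 :=
        Finset.sum_mul_sq_le_sq_mul_sq _ _ _
    _ = ∑ i, W i * v i ^ 2 := by
        have e1 : (∑ i, Real.sqrt (W i) ^ 2) = 1 := by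
          rw [← hW1]; exact Finset.sum_congr rfl fun i _ => Real.sq_sqrt (hW0 i)
        rw [e1, one_mul]
        refine Finset.sum_congr rfl fun i _ => ?_
        rw [mul_pow, Real.sq_sqrt (hW0 i), sq_abs]

lemma srr_sum_sqrt_le {ι : Type*} [Fintype ι] (v : ι → ℝ) (hv : ∀ i, 0 ≤ v i) :
    ∑ i, Real.sqrt (v i) ≤ Real.sqrt ((Fintype.card ι : ℝ) * ∑ i, v i) := by
  have h0 : 0 ≤ ∑ i, Real.sqrt (v i) := Finset.sum_nonneg fun i _ => Real.sqrt_nonneg _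
  have h1 : (0:ℝ) ≤ (Fintype.card ι : ℝ) * ∑ i, v i :=
    mul_nonneg (Nat.cast_nonneg _) (Finset.sum_nonneg fun i _ => hv i)
  rw [Real.le_sqrt h0 h1]
  calc (∑ i, Real.sqrt (v i)) ^ 2
      = (∑ i, 1 * Real.sqrt (v i)) ^ 2 := by simp
    _ ≤ (∑ _i : ι, (1:ℝ) ^ 2) * ∑ i, Real.sqrt (v i) ^ 2 :=
        Finset.sum_mul_sq_le_sq_mul_sq _ _ _
    _ = (Fintype.card ι : ℝ) * ∑ i, v i := by
        have e1 : (∑ _i : ι, (1:ℝ) ^ 2) = (Fintype.card ι : ℝ) := by simp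
        rw [e1]
        congr 1
        exact Finset.sum_congr rfl fun i _ => Real.sq_sqrt (hv i)

lemma srr_exists_le_of_avg {ι : Type*} [Fintype ι] (W f : ι → ℝ)
    (hW0 : ∀ i, 0 ≤ W i) (hW1 : ∑ i, W i = 1) (c : ℝ)
    (h : ∑ i, W i * f i ≤ c) : ∃ i, f i ≤ c := by
  by_contra hc
  push_neg at hc
  have hne : ∃ i, 0 < W i := by
    by_contra h0
    push_neg at h0
    have : ∑ i, W i = 0 := Finset.sum_eq_zero fun i _ => le_antisymm (h0 i) (hW0 i)
    rw [this] at hW1; norm_num at hW1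
  obtain ⟨i₀, hi₀⟩ := hne
  have hlt : ∑ i, W i * c < ∑ i, W i * f i := by
    refine Finset.sum_lt_sum (fun i _ => ?_) ⟨i₀, Finset.mem_univ _, ?_⟩
    · exact mul_le_mul_of_nonneg_left (hc i).le (hW0 i)
    · exact mul_lt_mul_of_pos_left (hc i₀) hi₀
  have : ∑ i, W i * c = c := by rw [← Finset.sum_mul, hW1, one_mul]
  linarith

lemma srr_var_bound {S : Type*} [Fintype S] {t : ℕ} (ht : 0 < t)
    (q : S → ℝ) (hq1 : ∑ s, q s = 1) (f : S → ℝ) :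
    ∑ σ : Fin t → S, (∏ j, q (σ j)) *
        ((∑ i, (t:ℝ)⁻¹ * f (σ i)) - ∑ s, q s * f s) ^ 2
      ≤ (∑ s, q s * f s ^ 2) / t := by
  set μ := ∑ s, q s * f s with hμ
  set ν := ∑ s, q s * f s ^ 2 with hν
  have htR : (0:ℝ) < t := Nat.cast_pos.mpr ht
  have key : ∀ i i' : Fin t,
      (∑ σ : Fin t → S, (∏ j, q (σ j)) * (f (σ i) * f (σ i')))
      = if i = i' then ν else μ ^ 2 := by
    intro i i'
    by_cases h : i = i'
    · subst h
      simp only [if_true]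
      calc ∑ σ : Fin t → S, (∏ j, q (σ j)) * (f (σ i) * f (σ i))
          = ∑ s, q s * (f s * f s) := srr_exp_one q hq1 (fun s => f s * f s) i
        _ = ν := Finset.sum_congr rfl fun s _ => by ring
    · simp only [h, if_false]
      calc ∑ σ : Fin t → S, (∏ j, q (σ j)) * (f (σ i) * f (σ i'))
          = μ * μ := srr_exp_two q hq1 f h
        _ = μ ^ 2 := (sq μ).symm
  have hsq : ∑ σ : Fin t → S, (∏ j, q (σ j)) * (∑ i, (t:ℝ)⁻¹ * f (σ i)) ^ 2
      = ν / t + μ ^ 2 - μ ^ 2 / t := by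
    calc ∑ σ : Fin t → S, (∏ j, q (σ j)) * (∑ i, (t:ℝ)⁻¹ * f (σ i)) ^ 2
        = ∑ σ : Fin t → S, ∑ i, ∑ i',
            (t:ℝ)⁻¹ * (t:ℝ)⁻¹ * ((∏ j, q (σ j)) * (f (σ i) * f (σ i'))) := by
          refine Finset.sum_congr rfl fun σ _ => ?_
          rw [sq, Finset.sum_mul_sum, Finset.mul_sum]
          refine Finset.sum_congr rfl fun i _ => ?_
          rw [Finset.mul_sum]
          exact Finset.sum_congr rfl fun i' _ => by ring
      _ = ∑ i : Fin t, ∑ i' : Fin t, ∑ σ : Fin t → S,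
            (t:ℝ)⁻¹ * (t:ℝ)⁻¹ * ((∏ j, q (σ j)) * (f (σ i) * f (σ i'))) := by
          rw [Finset.sum_comm]
          exact Finset.sum_congr rfl fun i _ => Finset.sum_comm
      _ = ∑ i : Fin t, ∑ i' : Fin t, (t:ℝ)⁻¹ * (t:ℝ)⁻¹ * (if i = i' then ν else μ ^ 2) := by
          refine Finset.sum_congr rfl fun i _ => Finset.sum_congr rfl fun i' _ => ?_
          rw [← Finset.mul_sum, key i i']
      _ = ∑ i : Fin t, (t:ℝ)⁻¹ * (t:ℝ)⁻¹ * (ν + ((t:ℝ) - 1) * μ ^ 2) := by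
          refine Finset.sum_congr rfl fun i _ => ?_
          rw [← Finset.mul_sum]
          congr 1
          have : ∑ i' : Fin t, (if i = i' then ν else μ ^ 2)
              = ∑ i' : Fin t, (μ ^ 2 + if i = i' then ν - μ ^ 2 else 0) := by
            refine Finset.sum_congr rfl fun i' _ => ?_
            by_cases h : i = i' <;> simp [h]
          rw [this, Finset.sum_add_distrib]
          simp [Finset.card_univ]
          ring
      _ = ν / t + μ ^ 2 - μ ^ 2 / t := by
          rw [Finset.sum_const, Finset.card_univ, Fintype.card_fin, nsmul_eq_mul]
          field_simp
          ring
  have hmean : ∑ σ : Fin t → S, (∏ j, q (σ j)) * (∑ i, (t:ℝ)⁻¹ * f (σ i)) = μ := by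
    calc ∑ σ : Fin t → S, (∏ j, q (σ j)) * (∑ i, (t:ℝ)⁻¹ * f (σ i))
        = ∑ σ : Fin t → S, ∑ i, (t:ℝ)⁻¹ * ((∏ j, q (σ j)) * f (σ i)) := by
          refine Finset.sum_congr rfl fun σ _ => ?_
          rw [Finset.mul_sum]
          exact Finset.sum_congr rfl fun i _ => by ring
      _ = ∑ i : Fin t, (t:ℝ)⁻¹ * ∑ σ : Fin t → S, (∏ j, q (σ j)) * f (σ i) := by
          rw [Finset.sum_comm]
          exact Finset.sum_congr rfl fun i _ => (Finset.mul_sum _ _ _).symm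
      _ = ∑ i : Fin t, (t:ℝ)⁻¹ * μ := by
          refine Finset.sum_congr rfl fun i _ => ?_
          rw [srr_exp_one q hq1 f i]
      _ = μ := by
          rw [Finset.sum_const, Finset.card_univ, Fintype.card_fin, nsmul_eq_mul]
          field_simp
  have htot : ∑ σ : Fin t → S, (∏ j, q (σ j)) = 1 := srr_exp_const q hq1
  have expand2 : ∀ σ : Fin t → S,
      (∏ j, q (σ j)) * ((∑ i, (t:ℝ)⁻¹ * f (σ i)) - μ) ^ 2
      = (∏ j, q (σ j)) * (∑ i, (t:ℝ)⁻¹ * f (σ i)) ^ 2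
        - 2 * μ * ((∏ j, q (σ j)) * (∑ i, (t:ℝ)⁻¹ * f (σ i)))
        + μ ^ 2 * (∏ j, q (σ j)) := by
    intro σ; ring
  rw [Finset.sum_congr rfl fun σ _ => expand2 σ]
  rw [Finset.sum_add_distrib, Finset.sum_sub_distrib, ← Finset.mul_sum, ← Finset.mul_sum]
  rw [hsq, hmean, htot]
  have hμ2 : 0 ≤ μ ^ 2 / t := div_nonneg (sq_nonneg _) htR.le
  have hfin : ν / t + μ ^ 2 - μ ^ 2 / t - 2 * μ * μ + μ ^ 2 * 1 = ν / t - μ ^ 2 / t := by ring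
  rw [hfin]
  linarith

lemma srr_sampling {S A B : Type*} [Fintype S] [Fintype A] [Fintype B]
    (q : S → ℝ) (hq0 : ∀ s, 0 ≤ q s) (hq1 : ∑ s, q s = 1)
    (w : A → ℝ) (hw0 : ∀ a, 0 ≤ w a) (hw1 : ∑ a, w a = 1)
    (h : S → A → B → ℝ) (hh0 : ∀ s a b, 0 ≤ h s a b) (hh1 : ∀ s a, ∑ b, h s a b ≤ 1)
    (t : ℕ) (ht : 0 < t) :
    ∃ σ : Fin t → S,
      (1/2) * ∑ a, ∑ b, |(∑ i, (t:ℝ)⁻¹ * (w a * h (σ i) a b))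
          - ∑ s, q s * (w a * h s a b)|
        ≤ (1/2) * Real.sqrt ((Fintype.card B : ℝ) / t) := by
  classical
  have htR : (0:ℝ) < t := Nat.cast_pos.mpr ht
  set W : (Fin t → S) → ℝ := fun σ => ∏ j, q (σ j) with hW
  have hW0 : ∀ σ, 0 ≤ W σ := fun σ => Finset.prod_nonneg fun j _ => hq0 _
  have hW1 : ∑ σ : Fin t → S, W σ = 1 := srr_exp_const q hq1
  set μ : A → B → ℝ := fun a b => ∑ s, q s * h s a b with hμdef
  set ν : A → B → ℝ := fun a b => ∑ s, q s * h s a b ^ 2 with hνdef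
  have hν0 : ∀ a b, 0 ≤ ν a b := fun a b =>
    Finset.sum_nonneg fun s _ => mul_nonneg (hq0 s) (sq_nonneg _)
  have hνsum : ∀ a, ∑ b, ν a b ≤ 1 := by
    intro a
    calc ∑ b, ν a b = ∑ s, q s * ∑ b, h s a b ^ 2 := by
          rw [Finset.sum_comm]
          exact Finset.sum_congr rfl fun s _ => (Finset.mul_sum _ _ _).symm
      _ ≤ ∑ s, q s * 1 := by
          refine Finset.sum_le_sum fun s _ => mul_le_mul_of_nonneg_left ?_ (hq0 s)
          have hle1 : ∀ b, h s a b ≤ 1 := fun b =>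
            le_trans (Finset.single_le_sum (fun b' _ => hh0 s a b') (Finset.mem_univ b))
              (hh1 s a)
          calc ∑ b, h s a b ^ 2 ≤ ∑ b, h s a b := by
                refine Finset.sum_le_sum fun b _ => ?_
                calc h s a b ^ 2 = h s a b * h s a b := sq (h s a b)
                  _ ≤ h s a b * 1 := mul_le_mul_of_nonneg_left (hle1 b) (hh0 s a b)
                  _ = h s a b := mul_one _
            _ ≤ 1 := hh1 s a
      _ = 1 := by simp [hq1]
  -- expected error bound
  have havg : ∑ σ : Fin t → S, W σ *
      ((1/2) * ∑ a, ∑ b, |(∑ i, (t:ℝ)⁻¹ * (w a * h (σ i) a b))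
          - ∑ s, q s * (w a * h s a b)|)
      ≤ (1/2) * Real.sqrt ((Fintype.card B : ℝ) / t) := by
    have pointabs : ∀ (σ : Fin t → S) (a : A) (b : B),
        |(∑ i, (t:ℝ)⁻¹ * (w a * h (σ i) a b)) - ∑ s, q s * (w a * h s a b)|
        = w a * |(∑ i, (t:ℝ)⁻¹ * h (σ i) a b) - μ a b| := by
      intro σ a b
      have e1 : (∑ i, (t:ℝ)⁻¹ * (w a * h (σ i) a b)) = w a * ∑ i, (t:ℝ)⁻¹ * h (σ i) a b := by
        rw [Finset.mul_sum]; exact Finset.sum_congr rfl fun i _ => by ring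
      have e2 : (∑ s, q s * (w a * h s a b)) = w a * μ a b := by
        rw [hμdef, Finset.mul_sum]; exact Finset.sum_congr rfl fun s _ => by ring
      rw [e1, e2, ← mul_sub, abs_mul, abs_of_nonneg (hw0 a)]
    calc ∑ σ : Fin t → S, W σ *
          ((1/2) * ∑ a, ∑ b, |(∑ i, (t:ℝ)⁻¹ * (w a * h (σ i) a b))
            - ∑ s, q s * (w a * h s a b)|)
        = (1/2) * ∑ a, w a * ∑ b, ∑ σ : Fin t → S,
            W σ * |(∑ i, (t:ℝ)⁻¹ * h (σ i) a b) - μ a b| := by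
          have l1 : ∀ σ : Fin t → S,
              W σ * ((1/2) * ∑ a, ∑ b, |(∑ i, (t:ℝ)⁻¹ * (w a * h (σ i) a b))
                - ∑ s, q s * (w a * h s a b)|)
              = ∑ a, ∑ b, (1/2) * (w a * (W σ *
                  |(∑ i, (t:ℝ)⁻¹ * h (σ i) a b) - μ a b|)) := by
            intro σ
            simp only [Finset.mul_sum]
            refine Finset.sum_congr rfl fun a _ => Finset.sum_congr rfl fun b _ => ?_
            rw [pointabs σ a b]; ring
          rw [Finset.sum_congr rfl fun σ _ => l1 σ]
          rw [Finset.sum_comm]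
          rw [Finset.mul_sum]
          refine Finset.sum_congr rfl fun a _ => ?_
          rw [Finset.sum_comm]
          simp only [Finset.mul_sum]
      _ ≤ (1/2) * ∑ a, w a * Real.sqrt ((Fintype.card B : ℝ) / t) := by
          have hhalf : (0:ℝ) ≤ 1/2 := by norm_num
          refine mul_le_mul_of_nonneg_left (Finset.sum_le_sum fun a _ => ?_) hhalf
          refine mul_le_mul_of_nonneg_left ?_ (hw0 a)
          calc ∑ b, ∑ σ : Fin t → S, W σ * |(∑ i, (t:ℝ)⁻¹ * h (σ i) a b) - μ a b|
              ≤ ∑ b, Real.sqrt (ν a b / t) := by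
                refine Finset.sum_le_sum fun b _ => ?_
                calc ∑ σ : Fin t → S, W σ * |(∑ i, (t:ℝ)⁻¹ * h (σ i) a b) - μ a b|
                    ≤ Real.sqrt (∑ σ : Fin t → S,
                        W σ * ((∑ i, (t:ℝ)⁻¹ * h (σ i) a b) - μ a b) ^ 2) :=
                      srr_jensen_abs W _ hW0 hW1
                  _ ≤ Real.sqrt (ν a b / t) :=
                      Real.sqrt_le_sqrt (srr_var_bound ht q hq1 (fun s => h s a b))
            _ ≤ Real.sqrt ((Fintype.card B : ℝ) * ∑ b, ν a b / t) :=
                srr_sum_sqrt_le _ (fun b => div_nonneg (hν0 a b) htR.le)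
            _ ≤ Real.sqrt ((Fintype.card B : ℝ) / t) := by
                refine Real.sqrt_le_sqrt ?_
                have : ∑ b, ν a b / t = (∑ b, ν a b) / t := by
                  rw [Finset.sum_div]
                rw [this]
                calc (Fintype.card B : ℝ) * ((∑ b, ν a b) / t)
                    ≤ (Fintype.card B : ℝ) * (1 / t) := by
                      exact mul_le_mul_of_nonneg_left
                        ((div_le_div_iff_of_pos_right htR).mpr (hνsum a)) (Nat.cast_nonneg _)
                  _ = (Fintype.card B : ℝ) / t := by ring
      _ = (1/2) * Real.sqrt ((Fintype.card B : ℝ) / t) := by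
          rw [← Finset.sum_mul, hw1, one_mul]
  exact srr_exists_le_of_avg W _ hW0 hW1 _ havg

set_option maxHeartbeats 1000000

/-- Claim 4.4, shared randomness reduction: any `(R₁, R₂, ε)`
two-senders–one-receiver message compression scheme with side information at the
receiver can be converted into an `(R₁, R₂, ε+2δ)` scheme whose shared-randomness sets
each have cardinality at most `24|ℳ||𝒩|/δ³`. -/
theorem shared_randomness_reduction
    (p : 𝒳 → 𝒴 → 𝒵 → ℳ → 𝒩 → ℝ) (hdist : IsDist p) (hMarkov : MarkovCond p)
    (ε δ : ℝ) (hε : ε ∈ Set.Ioo (0:ℝ) 1) (hδ : δ ∈ Set.Ioo (0:ℝ) 1)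
    (R₁ R₂ : ℝ) (hscheme : IsTwoSenderScheme p R₁ R₂ ε) :
    IsTwoSenderSchemeBounded p R₁ R₂ (ε + 2 * δ)
      (24 * (Fintype.card ℳ : ℝ) * (Fintype.card 𝒩 : ℝ) / δ ^ 3)
      (24 * (Fintype.card ℳ : ℝ) * (Fintype.card 𝒩 : ℝ) / δ ^ 3) := by
  classical
  obtain ⟨kA, kB, cA, cB, qA, qB, fA, fB, g, hqA0, hqA1, hqB0, hqB1, hcA, hcB, herr⟩ := hscheme
  obtain ⟨hp0, hp1⟩ := hdist
  have hδ0 : 0 < δ := hδ.1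
  have hδ1 : δ < 1 := hδ.2
  have hm0 : ∀ x y z, 0 ≤ margXYZ p x y z := fun x y z =>
    Finset.sum_nonneg fun m _ => Finset.sum_nonneg fun n _ => hp0 x y z m n
  have hm1 : ∑ x, ∑ y, ∑ z, margXYZ p x y z = 1 := by
    simpa [margXYZ] using hp1
  have hMpos : 0 < Fintype.card ℳ := by
    rcases isEmpty_or_nonempty ℳ with hE | hN
    · exfalso; simp at hp1
    · exact Fintype.card_pos
  have hNpos : 0 < Fintype.card 𝒩 := by
    rcases isEmpty_or_nonempty 𝒩 with hE | hN
    · exfalso; simp at hp1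
    · exact Fintype.card_pos
  set MN : ℝ := ((Fintype.card ℳ : ℝ) * (Fintype.card 𝒩 : ℝ)) with hMN
  have hM1 : (1:ℝ) ≤ (Fintype.card ℳ : ℝ) := by exact_mod_cast hMpos
  have hN1 : (1:ℝ) ≤ (Fintype.card 𝒩 : ℝ) := by exact_mod_cast hNpos
  have hMN1 : (1:ℝ) ≤ MN := by rw [hMN]; nlinarith
  set t : ℕ := ⌈MN / δ ^ 2⌉₊ with htdef
  have hMNδpos : 0 < MN / δ ^ 2 := by positivity
  have ht : 0 < t := Nat.ceil_pos.mpr hMNδpos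
  have htR : (0:ℝ) < t := Nat.cast_pos.mpr ht
  have htceil : MN / δ ^ 2 ≤ (t:ℝ) := Nat.le_ceil _
  -- cardinality bound for t
  have htb : (t:ℝ) ≤ 24 * (Fintype.card ℳ : ℝ) * (Fintype.card 𝒩 : ℝ) / δ ^ 3 := by
    have h1 : (t:ℝ) < MN / δ ^ 2 + 1 := Nat.ceil_lt_add_one hMNδpos.le
    have hδ3 : (0:ℝ) < δ ^ 3 := by positivity
    have hδ32 : δ ^ 3 ≤ δ ^ 2 := by nlinarith
    have h2 : MN / δ ^ 2 ≤ MN / δ ^ 3 :=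
      div_le_div_of_nonneg_left (by linarith) hδ3 hδ32
    have h3 : (1:ℝ) ≤ MN / δ ^ 3 := by
      rw [le_div_iff₀ hδ3]; nlinarith
    have h4 : 24 * (Fintype.card ℳ : ℝ) * (Fintype.card 𝒩 : ℝ) / δ ^ 3 = 24 * MN / δ ^ 3 := by
      rw [hMN]; ring
    have h5 : MN / δ ^ 3 + MN / δ ^ 3 ≤ 24 * MN / δ ^ 3 := by
      rw [← add_div]
      exact (div_le_div_iff_of_pos_right hδ3).mpr (by nlinarith)
    linarith [h4]
  -- error tolerance bound
  have hhalfsqrt : (1/2) * Real.sqrt ((Fintype.card (ℳ × 𝒩) : ℝ) / t) ≤ δ := by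
    have hcard : (Fintype.card (ℳ × 𝒩) : ℝ) = MN := by
      rw [hMN, Fintype.card_prod]; push_cast; ring
    rw [hcard]
    have h1 : MN / t ≤ δ ^ 2 := by
      rw [div_le_iff₀ htR]
      have := mul_le_mul_of_nonneg_right htceil (sq_nonneg δ)
      calc MN = MN / δ ^ 2 * δ ^ 2 := by field_simp
        _ ≤ (t:ℝ) * δ ^ 2 := this
        _ = δ ^ 2 * t := by ring
    calc (1/2) * Real.sqrt (MN / t) ≤ (1/2) * Real.sqrt (δ ^ 2) :=
          mul_le_mul_of_nonneg_left (Real.sqrt_le_sqrt h1) (by norm_num)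
      _ = (1/2) * δ := by rw [Real.sqrt_sq hδ0.le]
      _ ≤ δ := by linarith
  -- step 1: subsample Alice's randomness
  have hkA : kA ≠ 0 := by rintro rfl; simp at hqA1
  have hkB : kB ≠ 0 := by rintro rfl; simp at hqB1
  have hw0 : ∀ a : 𝒳 × 𝒴 × 𝒵, 0 ≤ margXYZ p a.1 a.2.1 a.2.2 := fun a => hm0 _ _ _
  have hw1 : ∑ a : 𝒳 × 𝒴 × 𝒵, margXYZ p a.1 a.2.1 a.2.2 = 1 := by
    simp only [Fintype.sum_prod_type]
    exact hm1
  obtain ⟨σA, hσA⟩ := srr_sampling qA hqA0 hqA1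
    (fun a : 𝒳 × 𝒴 × 𝒵 => margXYZ p a.1 a.2.1 a.2.2) hw0 hw1
    (fun sa (a : 𝒳 × 𝒴 × 𝒵) (b : ℳ × 𝒩) =>
      ∑ sb, qB sb * (if g (fA a.1 sa) (fB a.2.1 sb) a.2.2 sa sb = b then 1 else 0))
    (fun sa a b => Finset.sum_nonneg fun sb _ =>
      mul_nonneg (hqB0 sb) (by split <;> norm_num))
    (fun sa a => by
      rw [Finset.sum_comm]
      have : ∀ sb, (∑ b : ℳ × 𝒩,
          qB sb * (if g (fA a.1 sa) (fB a.2.1 sb) a.2.2 sa sb = b then 1 else 0)) = qB sb := by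
        intro sb
        rw [← Finset.mul_sum]
        simp
      rw [Finset.sum_congr rfl fun sb _ => this sb, hqB1])
    t ht
  -- step 2: subsample Bob's randomness
  obtain ⟨σB, hσB⟩ := srr_sampling qB hqB0 hqB1
    (fun a : 𝒳 × 𝒴 × 𝒵 => margXYZ p a.1 a.2.1 a.2.2) hw0 hw1
    (fun sb (a : 𝒳 × 𝒴 × 𝒵) (b : ℳ × 𝒩) =>
      ∑ i : Fin t, (t:ℝ)⁻¹ *
        (if g (fA a.1 (σA i)) (fB a.2.1 sb) a.2.2 (σA i) sb = b then 1 else 0))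
    (fun sb a b => Finset.sum_nonneg fun i _ =>
      mul_nonneg (by positivity) (by split <;> norm_num))
    (fun sb a => by
      rw [Finset.sum_comm]
      have : ∀ i : Fin t, (∑ b : ℳ × 𝒩, (t:ℝ)⁻¹ *
          (if g (fA a.1 (σA i)) (fB a.2.1 sb) a.2.2 (σA i) sb = b then 1 else 0))
          = (t:ℝ)⁻¹ := by
        intro i
        rw [← Finset.mul_sum]
        simp
      rw [Finset.sum_congr rfl fun i _ => this i]
      simp [Finset.card_univ]
      exact le_of_eq (mul_inv_cancel₀ (ne_of_gt htR)))
    t ht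
  -- the three intermediate distributions
  set Q0 : 𝒳 → 𝒴 → 𝒵 → ℳ → 𝒩 → ℝ := fun x y z m n =>
    ∑ sa, ∑ sb, qA sa * qB sb * margXYZ p x y z *
      (if g (fA x sa) (fB y sb) z sa sb = (m, n) then 1 else 0) with hQ0def
  set Q1 : 𝒳 → 𝒴 → 𝒵 → ℳ → 𝒩 → ℝ := fun x y z m n =>
    ∑ i : Fin t, ∑ sb, (t:ℝ)⁻¹ * qB sb * margXYZ p x y z *
      (if g (fA x (σA i)) (fB y sb) z (σA i) sb = (m, n) then 1 else 0) with hQ1def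
  set Q2 : 𝒳 → 𝒴 → 𝒵 → ℳ → 𝒩 → ℝ := fun x y z m n =>
    ∑ i : Fin t, ∑ j : Fin t, (t:ℝ)⁻¹ * (t:ℝ)⁻¹ * margXYZ p x y z *
      (if g (fA x (σA i)) (fB y (σB j)) z (σA i) (σB j) = (m, n) then 1 else 0) with hQ2def
  have herr' : (1/2) * (∑ x, ∑ y, ∑ z, ∑ m, ∑ n, |Q0 x y z m n - p x y z m n|) ≤ ε := herr
  -- bound on |Q1 - Q0|
  have hA : (1/2) * (∑ x, ∑ y, ∑ z, ∑ m, ∑ n, |Q1 x y z m n - Q0 x y z m n|) ≤ δ := by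
    refine le_trans (le_of_eq ?_) (hσA.trans hhalfsqrt)
    rw [hQ1def, hQ0def]
    simp only [Fintype.sum_prod_type]
    refine congrArg (fun r => (1/2:ℝ) * r) ?_
    refine Finset.sum_congr rfl fun x _ => Finset.sum_congr rfl fun y _ =>
      Finset.sum_congr rfl fun z _ => Finset.sum_congr rfl fun m _ =>
      Finset.sum_congr rfl fun n _ => ?_
    refine congrArg (fun r => |r|) ?_
    have e1 : (∑ i : Fin t, ∑ sb, (t:ℝ)⁻¹ * qB sb * margXYZ p x y z *
        (if g (fA x (σA i)) (fB y sb) z (σA i) sb = (m, n) then 1 else 0))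
        = ∑ i : Fin t, (t:ℝ)⁻¹ * (margXYZ p x y z *
          ∑ sb, qB sb * (if g (fA x (σA i)) (fB y sb) z (σA i) sb = (m, n) then 1 else 0)) := by
      refine Finset.sum_congr rfl fun i _ => ?_
      rw [Finset.mul_sum, Finset.mul_sum]
      exact Finset.sum_congr rfl fun sb _ => by ring
    have e0 : (∑ sa, ∑ sb, qA sa * qB sb * margXYZ p x y z *
        (if g (fA x sa) (fB y sb) z sa sb = (m, n) then 1 else 0))
        = ∑ sa, qA sa * (margXYZ p x y z *
          ∑ sb, qB sb * (if g (fA x sa) (fB y sb) z sa sb = (m, n) then 1 else 0)) := by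
      refine Finset.sum_congr rfl fun sa _ => ?_
      rw [Finset.mul_sum, Finset.mul_sum]
      exact Finset.sum_congr rfl fun sb _ => by ring
    exact congrArg₂ (fun u v => u - v) e1 e0
  -- bound on |Q2 - Q1|
  have hB : (1/2) * (∑ x, ∑ y, ∑ z, ∑ m, ∑ n, |Q2 x y z m n - Q1 x y z m n|) ≤ δ := by
    refine le_trans (le_of_eq ?_) (hσB.trans hhalfsqrt)
    rw [hQ2def, hQ1def]
    simp only [Fintype.sum_prod_type]
    refine congrArg (fun r => (1/2:ℝ) * r) ?_
    refine Finset.sum_congr rfl fun x _ => Finset.sum_congr rfl fun y _ =>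
      Finset.sum_congr rfl fun z _ => Finset.sum_congr rfl fun m _ =>
      Finset.sum_congr rfl fun n _ => ?_
    refine congrArg (fun r => |r|) ?_
    have e2 : (∑ i : Fin t, ∑ j : Fin t, (t:ℝ)⁻¹ * (t:ℝ)⁻¹ * margXYZ p x y z *
        (if g (fA x (σA i)) (fB y (σB j)) z (σA i) (σB j) = (m, n) then 1 else 0))
        = ∑ j : Fin t, (t:ℝ)⁻¹ * (margXYZ p x y z *
          ∑ i : Fin t, (t:ℝ)⁻¹ *
            (if g (fA x (σA i)) (fB y (σB j)) z (σA i) (σB j) = (m, n) then 1 else 0)) := by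
      rw [Finset.sum_comm]
      refine Finset.sum_congr rfl fun j _ => ?_
      rw [Finset.mul_sum, Finset.mul_sum]
      exact Finset.sum_congr rfl fun i _ => by ring
    have e1 : (∑ i : Fin t, ∑ sb, (t:ℝ)⁻¹ * qB sb * margXYZ p x y z *
        (if g (fA x (σA i)) (fB y sb) z (σA i) sb = (m, n) then 1 else 0))
        = ∑ sb, qB sb * (margXYZ p x y z *
          ∑ i : Fin t, (t:ℝ)⁻¹ *
            (if g (fA x (σA i)) (fB y sb) z (σA i) sb = (m, n) then 1 else 0)) := by
      rw [Finset.sum_comm]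
      refine Finset.sum_congr rfl fun sb _ => ?_
      rw [Finset.mul_sum, Finset.mul_sum]
      exact Finset.sum_congr rfl fun i _ => by ring
    exact congrArg₂ (fun u v => u - v) e2 e1
  -- assemble the bounded scheme
  refine ⟨t, t, cA, cB, fun _ => (t:ℝ)⁻¹, fun _ => (t:ℝ)⁻¹,
    fun x i => fA x (σA i), fun y j => fB y (σB j),
    fun c d z i j => g c d z (σA i) (σB j),
    fun _ => by positivity, ?_, fun _ => by positivity, ?_, htb, htb, hcA, hcB, ?_⟩
  · simp [Finset.card_univ]
    exact mul_inv_cancel₀ (ne_of_gt htR)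
  · simp [Finset.card_univ]
    exact mul_inv_cancel₀ (ne_of_gt htR)
  · show (1/2) * (∑ x, ∑ y, ∑ z, ∑ m, ∑ n, |Q2 x y z m n - p x y z m n|) ≤ ε + 2 * δ
    have tri : ∀ x y z m n, |Q2 x y z m n - p x y z m n|
        ≤ |Q2 x y z m n - Q1 x y z m n| + |Q1 x y z m n - Q0 x y z m n|
          + |Q0 x y z m n - p x y z m n| := by
      intro x y z m n
      have t1 := abs_sub_le (Q2 x y z m n) (Q1 x y z m n) (p x y z m n)
      have t2 := abs_sub_le (Q1 x y z m n) (Q0 x y z m n) (p x y z m n)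
      linarith
    calc (1/2) * (∑ x, ∑ y, ∑ z, ∑ m, ∑ n, |Q2 x y z m n - p x y z m n|)
        ≤ (1/2) * (∑ x, ∑ y, ∑ z, ∑ m, ∑ n,
            (|Q2 x y z m n - Q1 x y z m n| + |Q1 x y z m n - Q0 x y z m n|
              + |Q0 x y z m n - p x y z m n|)) := by
          refine mul_le_mul_of_nonneg_left ?_ (by norm_num)
          exact Finset.sum_le_sum fun x _ => Finset.sum_le_sum fun y _ =>
            Finset.sum_le_sum fun z _ => Finset.sum_le_sum fun m _ =>
            Finset.sum_le_sum fun n _ => tri x y z m n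
      _ = (1/2) * (∑ x, ∑ y, ∑ z, ∑ m, ∑ n, |Q2 x y z m n - Q1 x y z m n|)
          + (1/2) * (∑ x, ∑ y, ∑ z, ∑ m, ∑ n, |Q1 x y z m n - Q0 x y z m n|)
          + (1/2) * (∑ x, ∑ y, ∑ z, ∑ m, ∑ n, |Q0 x y z m n - p x y z m n|) := by
          simp only [Finset.sum_add_distrib]
          ring
      _ ≤ δ + δ + ε := add_le_add (add_le_add hB hA) herr'
      _ = ε + 2 * δ := by ring

end
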